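/- Let X ∈ ℝ^{k×n} have rows x_1ᵀ,…,x_kᵀ, let y ∈ {0,1}^k, and define the logistic log-likelihood l(β) := Σ_{i=1}^k [ y_i·⟨x_i, β⟩ − log(1 + exp(⟨x_i, β⟩)) ]. For S ⊆ [n] let X_S denote the submatrix of X consisting of the columns indexed by S. Then l is concave, and l is restricted smooth on the sparse subdomain Ω_r with parameter M := (1/4)·max_{S ⊆ [n], |S| ≤ r} λ_max(X_Sᵀ X_S): for all (x,y') ∈ Ω_r, 0 ≥ l(y') − l(x) − ⟨∇l(x), y'−x⟩ ≥ −(M/2)‖y'−x‖₂². -/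

import Mathlib

open scoped BigOperators Matrix

noncomputable section

abbrev Euc (n : ℕ) := EuclideanSpace ℝ (Fin n)

/-- Number of nonzero coordinates (the ℓ₀ "norm"). -/
def norm0 {n : ℕ} (x : Euc n) : ℕ := (Finset.univ.filter fun i => x i ≠ 0).card

/-- The submatrix of `X` consisting of the columns indexed by `S`. -/
def colsOn {d n : ℕ} (X : Matrix (Fin d) (Fin n) ℝ) (S : Finset (Fin n)) :
    Matrix (Fin d) {i // i ∈ S} ℝ :=
  X.submatrix id (fun j : {i // i ∈ S} => (j : Fin n))

/-- The Gram matrix `X_Sᵀ X_S`. -/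
def gramOn {d n : ℕ} (X : Matrix (Fin d) (Fin n) ℝ) (S : Finset (Fin n)) :
    Matrix {i // i ∈ S} {i // i ∈ S} ℝ :=
  (colsOn X S)ᵀ * colsOn X S

/-! ### Auxiliary definitions and lemmas -/

def sigf (t : ℝ) : ℝ := Real.exp t / (1 + Real.exp t)
def sigd (t : ℝ) : ℝ := Real.exp t / (1 + Real.exp t) ^ 2
def lphi (t : ℝ) : ℝ := Real.log (1 + Real.exp t)

lemma one_add_exp_pos (t : ℝ) : 0 < 1 + Real.exp t := by positivity

lemma hasDerivAt_lphi (t : ℝ) : HasDerivAt lphi (sigf t) t := by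
  have h := ((Real.hasDerivAt_exp t).const_add 1).log (ne_of_gt (one_add_exp_pos t))
  rw [show lphi = fun t => Real.log (1 + Real.exp t) from rfl]
  simpa [sigf] using h

lemma hasDerivAt_sigf (t : ℝ) : HasDerivAt sigf (sigd t) t := by
  have h := (Real.hasDerivAt_exp t).div ((Real.hasDerivAt_exp t).const_add 1)
    (ne_of_gt (one_add_exp_pos t))
  refine h.congr_deriv ?_
  have := one_add_exp_pos t
  rw [sigd]; field_simp; ring

lemma sigd_nonneg (t : ℝ) : 0 ≤ sigd t := by rw [sigd]; positivity

lemma sigd_le (t : ℝ) : sigd t ≤ 1 / 4 := by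
  rw [sigd, div_le_iff₀ (by positivity)]
  nlinarith [Real.exp_pos t, sq_nonneg (1 - Real.exp t)]

lemma concave_q (c : ℝ) : ConcaveOn ℝ Set.univ (fun s : ℝ => c * s - lphi s) := by
  have hf : ∀ s : ℝ, HasDerivAt (fun s : ℝ => c * s - lphi s) (c - sigf s) s := by
    intro s
    have h1 : HasDerivAt (fun s : ℝ => c * s) c s := by
      simpa using (hasDerivAt_id s).const_mul c
    exact h1.sub (hasDerivAt_lphi s)
  have hderiv : deriv (fun s : ℝ => c * s - lphi s) = fun s => c - sigf s :=
    funext fun s => (hf s).deriv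
  have hf2 : ∀ s : ℝ, HasDerivAt (fun s : ℝ => c - sigf s) (-sigd s) s :=
    fun s => (hasDerivAt_sigf s).const_sub c
  apply concaveOn_univ_of_deriv2_nonpos (fun s => (hf s).differentiableAt)
  · rw [hderiv]; exact fun s => (hf2 s).differentiableAt
  · intro s
    have h2 : deriv^[2] (fun s : ℝ => c * s - lphi s) s
        = deriv (deriv (fun s : ℝ => c * s - lphi s)) s := rfl
    rw [h2, hderiv, (hf2 s).deriv]
    linarith [sigd_nonneg s]

lemma nonneg_on (f f' : ℝ → ℝ) (hf : ∀ t, HasDerivAt f (f' t) t) (h0 : f 0 = 0)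
    (h' : ∀ t ∈ Set.Icc (0:ℝ) 1, 0 ≤ f' t) : ∀ t ∈ Set.Icc (0:ℝ) 1, 0 ≤ f t := by
  have hconts : Continuous f := by
    rw [continuous_iff_continuousAt]; exact fun t => (hf t).continuousAt
  have hm : MonotoneOn f (Set.Icc 0 1) := by
    apply monotoneOn_of_deriv_nonneg (convex_Icc 0 1) hconts.continuousOn
    · exact fun t _ => ((hf t).differentiableAt).differentiableWithinAt
    · intro t ht
      rw [interior_Icc] at ht
      rw [(hf t).deriv]
      exact h' t ⟨le_of_lt ht.1, le_of_lt ht.2⟩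
  intro t ht
  calc (0:ℝ) = f 0 := h0.symm
    _ ≤ f t := hm ⟨le_refl 0, zero_le_one⟩ ht ht.1

lemma taylor_bounds (g g' g'' : ℝ → ℝ) (C : ℝ)
    (hg : ∀ t, HasDerivAt g (g' t) t) (hg' : ∀ t, HasDerivAt g' (g'' t) t)
    (hup : ∀ t, g'' t ≤ 0) (hlo : ∀ t, -C ≤ g'' t) :
    g 1 - g 0 - g' 0 ≤ 0 ∧ -(C / 2) ≤ g 1 - g 0 - g' 0 := by
  constructor
  · have hF' : ∀ t ∈ Set.Icc (0:ℝ) 1, 0 ≤ g' 0 - g' t := by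
      apply nonneg_on _ (fun t => -(g'' t))
      · exact fun t => (hg' t).const_sub (g' 0)
      · simp
      · intro t _; linarith [hup t]
    have hF : ∀ t ∈ Set.Icc (0:ℝ) 1, 0 ≤ g 0 + t * g' 0 - g t := by
      apply nonneg_on _ (fun t => g' 0 - g' t)
      · intro t
        have h1 : HasDerivAt (fun t : ℝ => g 0 + t * g' 0) (g' 0) t := by
          simpa using ((hasDerivAt_id t).mul_const (g' 0)).const_add (g 0)
        exact h1.sub (hg t)
      · simp
      · exact hF'
    have := hF 1 ⟨zero_le_one, le_refl 1⟩
    linarith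
  · have hH' : ∀ t ∈ Set.Icc (0:ℝ) 1, 0 ≤ g' t - g' 0 + C * t := by
      apply nonneg_on _ (fun t => g'' t + C)
      · intro t
        have h1 : HasDerivAt (fun t : ℝ => C * t) C t := by
          simpa using (hasDerivAt_id t).const_mul C
        exact ((hg' t).sub_const (g' 0)).add h1
      · simp
      · intro t _; linarith [hlo t]
    have hH : ∀ t ∈ Set.Icc (0:ℝ) 1, 0 ≤ g t - g 0 - t * g' 0 + C / 2 * t ^ 2 := by
      apply nonneg_on _ (fun t => g' t - g' 0 + C * t)
      · intro t
        have h2 : HasDerivAt (fun t : ℝ => C / 2 * t ^ 2) (C * t) t := by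
          have := (hasDerivAt_pow 2 t).const_mul (C / 2)
          refine this.congr_deriv ?_
          simp; ring
        have h1 : HasDerivAt (fun t : ℝ => t * g' 0) (g' 0) t := by
          simpa using (hasDerivAt_id t).mul_const (g' 0)
        exact (((hg t).sub_const (g 0)).sub h1).add h2
      · simp
      · exact hH'
    have := hH 1 ⟨zero_le_one, le_refl 1⟩
    linarith

lemma rayleigh {m : Type*} [Fintype m] [DecidableEq m] (G : Matrix m m ℝ)
    (hG : G.IsHermitian) (c : ℝ) (hc : ∀ i, hG.eigenvalues i ≤ c) (w : m → ℝ) :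
    dotProduct w (G.mulVec w) ≤ c * dotProduct w w := by
  set U : Matrix m m ℝ := (hG.eigenvectorUnitary : Matrix m m ℝ) with hU
  have hmem := hG.eigenvectorUnitary.2
  rw [Unitary.mem_iff] at hmem
  have hstar : star U = Uᵀ := by
    ext i j
    simp [Matrix.star_apply]
  have h2 : U * Uᵀ = 1 := by rw [← hstar]; exact hmem.2
  set z : m → ℝ := Uᵀ.mulVec w with hz
  have hdiag : G = U * Matrix.diagonal hG.eigenvalues * Uᵀ := by
    have := hG.spectral_theorem
    simp only [Unitary.conjStarAlgAut_apply] at this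
    rw [hstar] at this
    simpa using this
  have key : dotProduct w (G.mulVec w)
      = dotProduct z ((Matrix.diagonal hG.eigenvalues).mulVec z) := by
    conv_lhs => rw [hdiag]
    rw [← Matrix.mulVec_mulVec, ← Matrix.mulVec_mulVec,
      Matrix.dotProduct_mulVec w U, ← Matrix.mulVec_transpose]
  have hzz : dotProduct z z = dotProduct w w := by
    rw [hz]
    rw [Matrix.dotProduct_mulVec, ← Matrix.mulVec_transpose, Matrix.transpose_transpose,
      Matrix.mulVec_mulVec, h2, Matrix.one_mulVec]
  rw [key, ← hzz]
  have hdd : dotProduct z ((Matrix.diagonal hG.eigenvalues).mulVec z)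
      = ∑ i, hG.eigenvalues i * z i ^ 2 := by
    simp [dotProduct, Matrix.mulVec_diagonal]
    congr 1; funext i; ring
  rw [hdd, dotProduct, Finset.mul_sum]
  apply Finset.sum_le_sum
  intro i _
  have hzi : z i * z i = z i ^ 2 := by ring
  rw [hzi]
  exact mul_le_mul_of_nonneg_right (hc i) (sq_nonneg _)

lemma sparse_quad {k n r : ℕ} (X : Matrix (Fin k) (Fin n) ℝ) (v : Euc n)
    (h : (Finset.univ.filter fun j => v j ≠ 0).card ≤ r) :
    ∑ i, (∑ j, X i j * v j) ^ 2 ≤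
      sSup {μ : ℝ | ∃ S : Finset (Fin n), S.card ≤ r ∧ μ ∈ spectrum ℝ (gramOn X S)}
        * ∑ j, v j ^ 2 := by
  set E := {μ : ℝ | ∃ S : Finset (Fin n), S.card ≤ r ∧ μ ∈ spectrum ℝ (gramOn X S)} with hE
  have hbdd : BddAbove E := by
    apply Set.Finite.bddAbove
    apply Set.Finite.subset
      (Set.finite_iUnion fun S : Finset (Fin n) => Matrix.finite_spectrum (gramOn X S))
    rintro μ ⟨S, _, hμ⟩
    exact Set.mem_iUnion.2 ⟨S, hμ⟩
  set S := Finset.univ.filter fun j => v j ≠ 0 with hS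
  have hv0 : ∀ j, j ∉ S → v j = 0 := by
    intro j hj
    by_contra hne
    exact hj (Finset.mem_filter.2 ⟨Finset.mem_univ j, hne⟩)
  set w : {j // j ∈ S} → ℝ := fun j => v j with hw
  have hb : ∀ i, (∑ j, X i j * v j) = (colsOn X S).mulVec w i := by
    intro i
    have h1 : ∑ j ∈ S, X i j * v j = ∑ j, X i j * v j := by
      apply Finset.sum_subset (Finset.subset_univ S)
      intro j _ hj
      rw [hv0 j hj, mul_zero]
    rw [← h1, ← Finset.sum_coe_sort S (fun j => X i j * v j)]
    simp [Matrix.mulVec, dotProduct, colsOn, hw]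
  have hherm : ((colsOn X S)ᵀ * colsOn X S).IsHermitian := by
    have hct : (colsOn X S)ᴴ = (colsOn X S)ᵀ := by ext a b; simp
    rw [← hct]
    exact Matrix.isHermitian_conjTranspose_mul_self _
  have hG : (gramOn X S).IsHermitian := hherm
  have heig : ∀ i, hG.eigenvalues i ≤ sSup E :=
    fun i => le_csSup hbdd ⟨S, h, hG.eigenvalues_mem_spectrum_real i⟩
  have hsq : ∑ i, (∑ j, X i j * v j) ^ 2
      = dotProduct w ((gramOn X S).mulVec w) := by
    rw [gramOn, ← Matrix.mulVec_mulVec, Matrix.dotProduct_mulVec, Matrix.vecMul_transpose]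
    simp only [dotProduct]
    congr 1; funext i
    rw [hb i]; ring
  have hww : dotProduct w w = ∑ j, v j ^ 2 := by
    have h0 : dotProduct w w = ∑ j : {j // j ∈ S}, v j * v j := rfl
    rw [h0, Finset.sum_coe_sort S (fun j => v j * v j)]
    have h1 : ∑ j ∈ S, v j * v j = ∑ j ∈ S, v j ^ 2 :=
      Finset.sum_congr rfl fun j _ => by ring
    rw [h1]
    apply Finset.sum_subset (Finset.subset_univ S)
    intro j _ hj
    rw [hv0 j hj]; ring
  calc ∑ i, (∑ j, X i j * v j) ^ 2 = dotProduct w ((gramOn X S).mulVec w) := hsq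
    _ ≤ sSup E * dotProduct w w := rayleigh _ hG _ heig w
    _ = sSup E * ∑ j, v j ^ 2 := by rw [hww]

lemma gradcomp {k n : ℕ} (X : Matrix (Fin k) (Fin n) ℝ) (y : Fin k → ℝ)
    (l : Euc n → ℝ)
    (hl : ∀ β : Euc n,
      l β = ∑ i, (y i * (∑ j, X i j * β j) - Real.log (1 + Real.exp (∑ j, X i j * β j))))
    (x : Euc n) :
    HasGradientAt l
      (WithLp.toLp 2 (fun j0 => ∑ i, (y i - sigf (∑ j, X i j * x j)) * X i j0 : Fin n → ℝ) : Euc n) x := by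
  set e : Fin k → Euc n := fun i => (WithLp.toLp 2 (fun j => X i j : Fin n → ℝ) : Euc n) with he
  have hinner : ∀ i (β : Euc n), (inner ℝ (e i) β : ℝ) = ∑ j, X i j * β j := by
    intro i β
    simp [he, PiLp.inner_apply, RCLike.inner_apply, mul_comm]
  rw [hasGradientAt_iff_hasFDerivAt]
  have hlfun : l = fun β => ∑ i, (y i * (inner ℝ (e i) β : ℝ) - lphi (inner ℝ (e i) β : ℝ)) := by
    funext β
    rw [hl]
    exact Finset.sum_congr rfl fun i _ => by rw [hinner, lphi]
  have hterm : ∀ i : Fin k, HasFDerivAt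
      (fun β : Euc n => y i * (inner ℝ (e i) β : ℝ) - lphi (inner ℝ (e i) β : ℝ))
      ((y i - sigf ((inner ℝ (e i) x : ℝ))) • innerSL ℝ (e i)) x := by
    intro i
    have h1 : HasFDerivAt (fun β : Euc n => (inner ℝ (e i) β : ℝ)) (innerSL ℝ (e i)) x :=
      (innerSL ℝ (e i)).hasFDerivAt
    have h2 : HasFDerivAt (fun β : Euc n => y i * (inner ℝ (e i) β : ℝ))
        (y i • innerSL ℝ (e i)) x := h1.const_mul (y i)
    have h3 : HasFDerivAt (fun β : Euc n => lphi (inner ℝ (e i) β : ℝ))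
        (sigf ((inner ℝ (e i) x : ℝ)) • innerSL ℝ (e i)) x :=
      (hasDerivAt_lphi ((inner ℝ (e i) x : ℝ))).comp_hasFDerivAt x h1
    have h4 := h2.sub h3
    rwa [← sub_smul] at h4
  have hsum : HasFDerivAt l
      (∑ i, (y i - sigf ((inner ℝ (e i) x : ℝ))) • innerSL ℝ (e i)) x := by
    rw [hlfun]
    exact HasFDerivAt.fun_sum fun i _ => hterm i
  have heq : InnerProductSpace.toDual ℝ (Euc n)
        (WithLp.toLp 2 (fun j0 => ∑ i, (y i - sigf (∑ j, X i j * x j)) * X i j0 : Fin n → ℝ) : Euc n)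
      = ∑ i, (y i - sigf ((inner ℝ (e i) x : ℝ))) • innerSL ℝ (e i) := by
    apply ContinuousLinearMap.ext
    intro β
    rw [InnerProductSpace.toDual_apply_apply]
    simp only [ContinuousLinearMap.sum_apply, ContinuousLinearMap.coe_smul', Pi.smul_apply,
      innerSL_apply_apply, smul_eq_mul]
    simp only [hinner]
    simp only [PiLp.inner_apply, RCLike.inner_apply, conj_trivial]
    simp only [Finset.sum_mul, Finset.mul_sum]
    rw [Finset.sum_comm]
    exact Finset.sum_congr rfl fun i _ => Finset.sum_congr rfl fun j _ => by ring
  rw [← heq] at hsum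
  exact hsum

theorem stmt8 {k n r : ℕ}
    (X : Matrix (Fin k) (Fin n) ℝ) (y : Fin k → ℝ)
    (hy : ∀ i, y i = 0 ∨ y i = 1)
    (l : Euc n → ℝ)
    (hl : ∀ β : Euc n,
      l β = ∑ i, (y i * (∑ j, X i j * β j) - Real.log (1 + Real.exp (∑ j, X i j * β j))))
    (M : ℝ)
    (hM : M = (1 / 4) *
      sSup {μ : ℝ | ∃ S : Finset (Fin n), S.card ≤ r ∧ μ ∈ spectrum ℝ (gramOn X S)}) :
    ConcaveOn ℝ Set.univ l ∧
    ∀ x y' : Euc n, norm0 x ≤ r → norm0 y' ≤ r → norm0 (x - y') ≤ r →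
      (l y' - l x - (inner ℝ (gradient l x) (y' - x) : ℝ) ≤ 0) ∧
      (-(M / 2) * ‖y' - x‖ ^ 2 ≤ l y' - l x - (inner ℝ (gradient l x) (y' - x) : ℝ)) := by
  constructor
  · -- Concavity
    refine ⟨convex_univ, ?_⟩
    intro p _ q _ a b ha hb hab
    have hcombo : ∀ i : Fin k, (∑ j, X i j * (a • p + b • q) j)
        = a * (∑ j, X i j * p j) + b * (∑ j, X i j * q j) := by
      intro i
      simp only [PiLp.add_apply, PiLp.smul_apply, smul_eq_mul]
      rw [Finset.mul_sum, Finset.mul_sum, ← Finset.sum_add_distrib]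
      exact Finset.sum_congr rfl fun j _ => by ring
    rw [hl p, hl q, hl (a • p + b • q)]
    have hstep : ∀ i : Fin k,
        a * (y i * (∑ j, X i j * p j) - lphi (∑ j, X i j * p j))
          + b * (y i * (∑ j, X i j * q j) - lphi (∑ j, X i j * q j))
        ≤ y i * (∑ j, X i j * (a • p + b • q) j) - lphi (∑ j, X i j * (a • p + b • q) j) := by
      intro i
      have := (concave_q (y i)).2 (Set.mem_univ (∑ j, X i j * p j))
        (Set.mem_univ (∑ j, X i j * q j)) ha hb hab
      simp only [smul_eq_mul] at this
      rw [hcombo i]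
      exact this
    calc a • ∑ i, (y i * (∑ j, X i j * p j) - Real.log (1 + Real.exp (∑ j, X i j * p j)))
          + b • ∑ i, (y i * (∑ j, X i j * q j) - Real.log (1 + Real.exp (∑ j, X i j * q j)))
        = ∑ i, (a * (y i * (∑ j, X i j * p j) - lphi (∑ j, X i j * p j))
            + b * (y i * (∑ j, X i j * q j) - lphi (∑ j, X i j * q j))) := by
          simp only [smul_eq_mul, Finset.mul_sum, lphi, ← Finset.sum_add_distrib]
      _ ≤ ∑ i, (y i * (∑ j, X i j * (a • p + b • q) j)
            - lphi (∑ j, X i j * (a • p + b • q) j)) :=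
          Finset.sum_le_sum fun i _ => hstep i
      _ = ∑ i, (y i * (∑ j, X i j * (a • p + b • q) j)
            - Real.log (1 + Real.exp (∑ j, X i j * (a • p + b • q) j))) := by
          simp only [lphi]
  · -- Restricted smoothness
    intro x y' hx hy' hxy'
    set v : Euc n := y' - x with hv
    set a : Fin k → ℝ := fun i => ∑ j, X i j * x j with hadef
    set b : Fin k → ℝ := fun i => ∑ j, X i j * v j with hbdef
    -- sparsity of v
    have hvcard : (Finset.univ.filter fun j => v j ≠ 0).card ≤ r := by
      have hcc : (Finset.univ.filter fun j => v j ≠ 0)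
          = (Finset.univ.filter fun j => (x - y') j ≠ 0) := by
        ext j
        simp only [Finset.mem_filter, Finset.mem_univ, true_and, hv, PiLp.sub_apply,
          sub_ne_zero]
        exact ⟨Ne.symm, Ne.symm⟩
      rw [hcc]
      exact hxy'
    have hnormv : ‖v‖ ^ 2 = ∑ j, v j ^ 2 := by
      rw [← real_inner_self_eq_norm_sq]
      simp only [PiLp.inner_apply, RCLike.inner_apply, conj_trivial, sq]
    have hquad : ∑ i, b i ^ 2 ≤
        sSup {μ : ℝ | ∃ S : Finset (Fin n), S.card ≤ r ∧ μ ∈ spectrum ℝ (gramOn X S)}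
          * ∑ j, v j ^ 2 := sparse_quad X v hvcard
    -- the gradient
    set G : Euc n := (WithLp.toLp 2 (fun j0 => ∑ i, (y i - sigf (∑ j, X i j * x j)) * X i j0 :
        Fin n → ℝ) : Euc n) with hGdef
    have hGrad : HasGradientAt l G x := gradcomp X y l hl x
    have hgv : gradient l x = G := hGrad.gradient
    -- 1-D reduction
    set g : ℝ → ℝ := fun t => ∑ i, (y i * (a i + t * b i) - lphi (a i + t * b i)) with hgdef
    set g1 : ℝ → ℝ := fun t => ∑ i, (b i * (y i - sigf (a i + t * b i))) with hg1def
    set g2 : ℝ → ℝ := fun t => ∑ i, -(b i ^ 2 * sigd (a i + t * b i)) with hg2def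
    have hin : ∀ (i : Fin k) (t : ℝ), HasDerivAt (fun t : ℝ => a i + t * b i) (b i) t := by
      intro i t
      simpa using ((hasDerivAt_id t).mul_const (b i)).const_add (a i)
    have hgd : ∀ t, HasDerivAt g (g1 t) t := by
      intro t
      apply HasDerivAt.fun_sum
      intro i _
      have h1 : HasDerivAt (fun t : ℝ => y i * (a i + t * b i)) (y i * b i) t :=
        (hin i t).const_mul (y i)
      have h2 : HasDerivAt (fun t : ℝ => lphi (a i + t * b i))
          (sigf (a i + t * b i) * b i) t := (hasDerivAt_lphi _).comp t (hin i t)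
      have := h1.sub h2
      refine this.congr_deriv ?_
      ring
    have hg1d : ∀ t, HasDerivAt g1 (g2 t) t := by
      intro t
      apply HasDerivAt.fun_sum
      intro i _
      have h2 : HasDerivAt (fun t : ℝ => sigf (a i + t * b i))
          (sigd (a i + t * b i) * b i) t := (hasDerivAt_sigf _).comp t (hin i t)
      have := (h2.const_sub (y i)).const_mul (b i)
      refine this.congr_deriv ?_
      ring
    have hup : ∀ t, g2 t ≤ 0 := by
      intro t
      apply Finset.sum_nonpos
      intro i _
      exact neg_nonpos.2 (mul_nonneg (sq_nonneg _) (sigd_nonneg _))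
    have hlo : ∀ t, -(M * ‖v‖ ^ 2) ≤ g2 t := by
      intro t
      have hA : ∑ i, -(b i ^ 2 * (1 / 4)) ≤ g2 t := by
        apply Finset.sum_le_sum
        intro i _
        exact neg_le_neg (mul_le_mul_of_nonneg_left (sigd_le _) (sq_nonneg _))
      have hB : ∑ i, -(b i ^ 2 * (1 / 4)) = -(1 / 4) * ∑ i, b i ^ 2 := by
        rw [Finset.mul_sum]
        exact Finset.sum_congr rfl fun i _ => by ring
      have hM' : M * ‖v‖ ^ 2
          = 1 / 4 * (sSup {μ : ℝ | ∃ S : Finset (Fin n), S.card ≤ r ∧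
              μ ∈ spectrum ℝ (gramOn X S)} * ∑ j, v j ^ 2) := by
        rw [hM, hnormv]; ring
      linarith
    -- endpoint identities
    have hg0 : g 0 = l x := by
      rw [hl x, hgdef]
      exact Finset.sum_congr rfl fun i _ => by simp [lphi, hadef]
    have hgone : g 1 = l y' := by
      rw [hl y', hgdef]
      apply Finset.sum_congr rfl
      intro i _
      have hab : a i + 1 * b i = ∑ j, X i j * y' j := by
        rw [one_mul, hadef, hbdef, ← Finset.sum_add_distrib]
        apply Finset.sum_congr rfl
        intro j _
        rw [hv]
        simp only [PiLp.sub_apply]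
        ring
      rw [hab, lphi]
    have hIG : (inner ℝ (gradient l x) (y' - x) : ℝ) = g1 0 := by
      rw [hgv, hGdef, ← hv, hg1def]
      simp only [PiLp.inner_apply, RCLike.inner_apply, conj_trivial]
      simp only [Finset.sum_mul, Finset.mul_sum]
      rw [Finset.sum_comm]
      apply Finset.sum_congr rfl
      intro i _
      simp only [zero_mul, add_zero, hadef, hbdef, Finset.sum_mul]
      apply Finset.sum_congr rfl
      intro j _
      ring
    obtain ⟨hT1, hT2⟩ := taylor_bounds g g1 g2 (M * ‖v‖ ^ 2) hgd hg1d hup hlo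
    rw [← hv] at *
    constructor
    · rw [hIG, ← hg0, ← hgone]
      exact hT1
    · rw [hIG, ← hg0, ← hgone]
      calc -(M / 2) * ‖v‖ ^ 2 = -(M * ‖v‖ ^ 2 / 2) := by ring
        _ ≤ g 1 - g 0 - g1 0 := hT2
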